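/- For every base b ≥ 2, the language P_b^* (the Kleene star of the language of base-b representations of primes) is not regular. -/

import Mathlib

open Computability

/-- The base-`b` representation of `m`, most significant digit first. -/
def repr' (b m : ℕ) : List ℕ := (Nat.digits b m).reverse

/-- The language of base-`b` representations of primes. -/
def P (b : ℕ) : Language ℕ := {w | ∃ p : ℕ, Nat.Prime p ∧ w = repr' b p}

private lemma ofDigits_replicate_zero (b m : ℕ) :
    Nat.ofDigits b (List.replicate m 0) = 0 := by
  induction m with
  | zero => simp [Nat.ofDigits]
  | succ m ih =>
    rw [List.replicate_succ, Nat.ofDigits_cons, ih]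
    simp

/-- A nonempty word in `(P b)∗` ends with a block from `P b`. -/
private lemma exists_last_block {b : ℕ} {w : List ℕ} (hw : w ∈ (P b)∗) (hne : w ≠ []) :
    ∃ u s, w = u ++ s ∧ s ∈ P b := by
  rw [Language.mem_kstar] at hw
  obtain ⟨L, rfl, hL⟩ := hw
  rcases List.eq_nil_or_concat L with rfl | ⟨L', s, rfl⟩
  · simp at hne
  · exact ⟨L'.flatten, s, by simp, hL s (by simp)⟩

/-- If `repr' b D ++ 0^m ++ [1]` is in `(P b)∗` then some "ending value"
`S * b^(m+1) + 1` is prime, where `S` comes from a fixed finite set. -/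
private lemma extract {b : ℕ} (_hb : 2 ≤ b) (D m : ℕ)
    (h : (repr' b D ++ (List.replicate m 0 ++ [1])) ∈ (P b)∗) :
    ∃ t₂ ∈ (Nat.digits b D).inits,
      Nat.Prime (Nat.ofDigits b t₂ * b ^ (m + 1) + 1) := by
  obtain ⟨u, s, hw, hs⟩ := exists_last_block h (by simp)
  obtain ⟨q, hq, rfl⟩ := hs
  have key : Nat.digits b q ++ u.reverse
      = (1 :: List.replicate m 0) ++ Nat.digits b D := by
    have h2 := congrArg List.reverse hw
    simp only [repr', List.reverse_append, List.reverse_reverse, List.reverse_replicate,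
      List.reverse_cons, List.reverse_nil, List.nil_append, List.append_assoc] at h2
    simpa using h2.symm
  have hq0 : q ≠ 0 := hq.pos.ne'
  have hdne : Nat.digits b q ≠ [] := Nat.digits_ne_nil_iff_ne_zero.mpr hq0
  by_cases hlen : (Nat.digits b q).length ≤ m + 1
  · -- the last block sits inside `0^m ++ [1]`; then its value is ≤ 1, contradiction
    exfalso
    have ht : Nat.digits b q = (1 :: List.replicate m 0).take (Nat.digits b q).length := by
      have h1 : ((Nat.digits b q) ++ u.reverse).take (Nat.digits b q).length
          = Nat.digits b q := List.take_left
      rw [key] at h1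
      rw [List.take_append_of_le_length (by simpa using hlen)] at h1
      exact h1.symm
    have hqval : q = Nat.ofDigits b (Nat.digits b q) := (Nat.ofDigits_digits b q).symm
    rcases hnl : (Nat.digits b q).length with _ | ℓ
    · exact hdne (List.length_eq_zero_iff.mp hnl)
    · rw [hnl] at ht
      rw [ht, List.take_succ_cons, List.take_replicate, Nat.ofDigits_cons,
        ofDigits_replicate_zero] at hqval
      have := hq.two_le
      omega
  · push_neg at hlen
    have hlen1 : (1 :: List.replicate m 0).length = m + 1 := by simp
    have htake : (Nat.digits b q).take (m + 1) = 1 :: List.replicate m 0 := by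
      have h1 := congrArg (List.take (m + 1)) key
      rw [List.take_append_of_le_length (by omega)] at h1
      rw [h1, ← hlen1, List.take_left]
    have hdrop : (Nat.digits b q).drop (m + 1) ++ u.reverse = Nat.digits b D := by
      have h1 := congrArg (List.drop (m + 1)) key
      rw [List.drop_append_of_le_length (by omega)] at h1
      rw [h1, ← hlen1, List.drop_left]
    set t₂ := (Nat.digits b q).drop (m + 1) with ht₂
    have hpre : t₂ <+: Nat.digits b D := ⟨u.reverse, hdrop⟩
    have hdq : Nat.digits b q = (1 :: List.replicate m 0) ++ t₂ := by
      conv_lhs => rw [← List.take_append_drop (m + 1) (Nat.digits b q)]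
      rw [htake]
    have hqval : q = Nat.ofDigits b t₂ * b ^ (m + 1) + 1 := by
      conv_lhs => rw [← Nat.ofDigits_digits b q, hdq]
      rw [Nat.ofDigits_append, Nat.ofDigits_cons, ofDigits_replicate_zero, hlen1]
      ring
    exact ⟨t₂, (List.mem_inits _ _).mpr hpre, hqval ▸ hq⟩

/-- The composite-making lemma: given a finite list `V` of candidate coefficients,
there is an arithmetic progression of `t`s along which `S * b^(n + t*d + 1) + 1`
is never prime, for all `S ∈ V`. -/
private lemma kill (b d : ℕ) (hb : 2 ≤ b) (hd : 1 ≤ d) (n : ℕ) (V : List ℕ) :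
    ∃ a mm : ℕ, 1 ≤ mm ∧ ∀ u, ∀ S ∈ V,
      ¬ Nat.Prime (S * b ^ (n + (a + u * mm) * d + 1) + 1) := by
  induction V with
  | nil => exact ⟨0, 1, le_refl 1, by simp⟩
  | cons S0 V ih =>
    obtain ⟨a, mm, hmm, hV⟩ := ih
    by_cases hex : ∃ u, Nat.Prime (S0 * b ^ (n + (a + u * mm) * d + 1) + 1)
    · obtain ⟨u0, hq⟩ := hex
      set e0 := n + (a + u0 * mm) * d + 1 with he0
      set q := S0 * b ^ e0 + 1 with hqdef
      have hS0 : 1 ≤ S0 := by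
        rcases Nat.eq_zero_or_pos S0 with rfl | h
        · simp [hqdef] at hq
          exact absurd hq Nat.not_prime_one
        · exact h
      have hbe : b ≤ b ^ e0 := by
        calc b = b ^ 1 := (pow_one b).symm
        _ ≤ b ^ e0 := Nat.pow_le_pow_right (by omega) (by omega)
      have hqb : b < q := by
        have h1 : b ^ e0 ≤ S0 * b ^ e0 := Nat.le_mul_of_pos_left _ hS0
        omega
      have hq2 := hq.two_le
      have hcop : Nat.Coprime b q := by
        refine (hq.coprime_iff_not_dvd.mpr ?_).symm
        intro hdvd
        have := Nat.le_of_dvd (by omega) hdvd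
        omega
      have hfer : b ^ (q - 1) ≡ 1 [MOD q] := by
        have h1 := Nat.ModEq.pow_totient hcop
        rwa [Nat.totient_prime hq] at h1
      refine ⟨a + u0 * mm + mm * (q - 1), mm * (q - 1), Nat.mul_pos hmm (by omega), ?_⟩
      intro u S hS
      rcases List.mem_cons.mp hS with rfl | hS'
      · -- the distinguished coefficient: value divisible by q and bigger than q
        intro hN
        set E := n + (a + u0 * mm + mm * (q - 1) + u * (mm * (q - 1))) * d + 1 with hE
        have hexp : E = e0 + (q - 1) * (mm * d * (u + 1)) := by rw [hE, he0]; ring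
        have h1 : (b ^ (q - 1)) ^ (mm * d * (u + 1)) ≡ 1 [MOD q] := by
          simpa using hfer.pow (mm * d * (u + 1))
        have h2 : S * b ^ E + 1 ≡ S * b ^ e0 + 1 [MOD q] := by
          rw [hexp, pow_add, pow_mul, ← mul_assoc]
          exact ((h1.mul_left (S * b ^ e0)).trans (by simp [Nat.ModEq])).add_right 1
        have hdvd : q ∣ S * b ^ E + 1 := by
          have h3 : S * b ^ E + 1 ≡ 0 [MOD q] := by
            refine h2.trans ?_
            rw [← hqdef]
            exact (Nat.modEq_zero_iff_dvd).mpr dvd_rfl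
          exact (Nat.modEq_zero_iff_dvd).mp h3
        have hEgt : e0 + 1 ≤ E := by
          have : 0 < (q - 1) * (mm * d * (u + 1)) :=
            Nat.mul_pos (by omega) (Nat.mul_pos (Nat.mul_pos (by omega) (by omega)) (by omega))
          omega
        have hlt : q < S * b ^ E + 1 := by
          have h4 : b ^ (e0 + 1) ≤ b ^ E := Nat.pow_le_pow_right (by omega) hEgt
          have h5 : b ^ e0 * b ≤ b ^ E := by rw [← pow_succ]; exact h4
          have h6 : S * (b ^ e0 * b) ≤ S * b ^ E := Nat.mul_le_mul_left _ h5
          have h7 : S * b ^ e0 * 2 ≤ S * (b ^ e0 * b) := by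
            rw [← mul_assoc]
            exact Nat.mul_le_mul_left _ hb
          have h8 : 1 * 1 ≤ S * b ^ e0 := Nat.mul_le_mul hS0 (pow_pos (show 0 < b by omega) e0)
          omega
        rcases (hN.eq_one_or_self_of_dvd q hdvd) with h | h <;> omega
      · have heq : a + u0 * mm + mm * (q - 1) + u * (mm * (q - 1))
            = a + (u0 + (q - 1) * (u + 1)) * mm := by ring
        rw [heq]
        exact hV (u0 + (q - 1) * (u + 1)) S hS'
    · push_neg at hex
      refine ⟨a, mm, hmm, fun u S hS => ?_⟩
      rcases List.mem_cons.mp hS with rfl | h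
      exacts [hex u, hV u S h]

/-- For every base `b ≥ 2`, the Kleene star of the language of base-`b`
representations of primes is not regular. -/
theorem kstar_primes_not_regular (b : ℕ) (hb : 2 ≤ b) :
    ¬ ((P b)∗).IsRegular := by
  rintro ⟨σ, hσ, M, hM⟩
  haveI := hσ
  set n := Fintype.card σ with hn
  -- a prime that ends (in base b) with digits `0^n 1`
  obtain ⟨p, hp, hpgt, hpmod⟩ :=
    Nat.exists_prime_gt_modEq_one (k := b ^ (n + 1)) (b ^ (n + 1))
      (pow_pos (show 0 < b by omega) (n + 1)).ne'
  set B := b ^ (n + 1) with hB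
  have hB1 : 1 < B := by
    rw [hB]
    exact one_lt_pow' (by omega) (by omega)
  have hmod : p % B = 1 := by
    have h1 : p % B = 1 % B := hpmod
    rwa [Nat.mod_eq_of_lt hB1] at h1
  set D := p / B with hD
  have hpeq : B * D + 1 = p := by
    conv_rhs => rw [← Nat.div_add_mod p B]
    rw [hmod]
  have hD1 : 1 ≤ D := by
    rcases Nat.eq_zero_or_pos D with h | h
    · rw [h, mul_zero] at hpeq; omega
    · exact h
  have hdig : Nat.digits b p = 1 :: (List.replicate n 0 ++ Nat.digits b D) := by
    have h1 : p = b * (b ^ n * D) + 1 := by rw [← hpeq, hB]; ring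
    have hx : (b * (b ^ n * D) + 1) % b = 1 := by
      rw [Nat.mul_add_mod]
      exact Nat.mod_eq_of_lt (by omega)
    have hy : (b * (b ^ n * D) + 1) / b = b ^ n * D := by
      rw [Nat.mul_add_div (by omega)]
      rw [Nat.div_eq_of_lt (by omega), Nat.add_zero]
    rw [h1, Nat.digits_def' (by omega : 1 < b) (Nat.succ_pos _)]
    simp only [Nat.succ_eq_add_one]
    rw [hx, hy, Nat.digits_base_pow_mul (by omega) hD1]
  have hrepr : repr' b p = repr' b D ++ (List.replicate n 0 ++ [1]) := by
    rw [repr', hdig]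
    simp [repr', List.reverse_append, List.append_assoc]
  -- pigeonhole on DFA states while reading zeros
  set q0 := M.evalFrom M.start (repr' b D) with hq0
  obtain ⟨i, j, hij, hfij⟩ :=
    Fintype.exists_ne_map_eq_of_card_lt
      (fun i : Fin (n + 1) => M.evalFrom q0 (List.replicate (i : ℕ) 0))
      (by simp [hn])
  have hmain : ∃ k j' : ℕ, k < j' ∧ j' ≤ n ∧
      M.evalFrom q0 (List.replicate k 0) = M.evalFrom q0 (List.replicate j' 0) := by
    rcases lt_or_gt_of_ne hij with h | h
    · exact ⟨i, j, h, by omega, hfij⟩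
    · exact ⟨j, i, h, by omega, hfij.symm⟩
  obtain ⟨k, j', hkj, hj'n, hfeq⟩ := hmain
  set d := j' - k with hdd
  have hd1 : 1 ≤ d := by omega
  have hstate : ∀ t, M.evalFrom q0 (List.replicate (k + t * d) 0)
      = M.evalFrom q0 (List.replicate k 0) := by
    intro t
    induction t with
    | zero => simp
    | succ t ih =>
      have e1 : M.evalFrom q0 (List.replicate j' 0)
          = M.evalFrom (M.evalFrom q0 (List.replicate k 0)) (List.replicate d 0) := by
        rw [show j' = k + d by omega, List.replicate_add, DFA.evalFrom_of_append]
      have h1 : k + (t + 1) * d = (k + t * d) + d := by ring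
      rw [h1, List.replicate_add, DFA.evalFrom_of_append, ih, ← e1, ← hfeq]
  have hmem : ∀ t, (repr' b D ++ (List.replicate (n + t * d) 0 ++ [1])) ∈ (P b)∗ := by
    intro t
    have h0 : repr' b p ∈ (P b)∗ := by
      rw [Language.mem_kstar]
      refine ⟨[repr' b p], by simp, ?_⟩
      rintro y hy
      simp only [List.mem_singleton] at hy
      subst hy
      exact ⟨p, hp, rfl⟩
    rw [← hM] at h0 ⊢
    rw [DFA.mem_accepts] at h0 ⊢
    have heval : ∀ m, M.eval (repr' b D ++ (List.replicate m 0 ++ [1]))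
        = M.evalFrom (M.evalFrom q0 (List.replicate m 0)) [1] := by
      intro m
      rw [DFA.eval, DFA.evalFrom_of_append, ← hq0, DFA.evalFrom_of_append]
    have h1 : M.eval (repr' b D ++ (List.replicate (n + t * d) 0 ++ [1]))
        = M.eval (repr' b p) := by
      rw [heval, hrepr, heval]
      congr 1
      have e2 : M.evalFrom q0 (List.replicate n 0)
          = M.evalFrom (M.evalFrom q0 (List.replicate k 0)) (List.replicate (n - k) 0) := by
        conv_lhs => rw [show n = k + (n - k) by omega, List.replicate_add]
        rw [DFA.evalFrom_of_append]
      have h2 : n + t * d = (k + t * d) + (n - k) := by omega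
      rw [h2, List.replicate_add, DFA.evalFrom_of_append, hstate, ← e2]
    rwa [h1]
  -- derive the contradiction
  obtain ⟨a, mm, hmm, hkill⟩ :=
    kill b d hb hd1 n (((Nat.digits b D).inits).map (Nat.ofDigits b))
  obtain ⟨t₂, ht₂, hprime⟩ := extract hb D (n + a * d) (hmem a)
  have hSin : Nat.ofDigits b t₂ ∈ ((Nat.digits b D).inits).map (Nat.ofDigits b) :=
    List.mem_map_of_mem ht₂
  have := hkill 0 (Nat.ofDigits b t₂) hSin
  simp only [Nat.zero_mul, Nat.add_zero] at this
  exact this hprime
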